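/- For every x ∈ H^s, ‖μ^N(x) − μ(x)‖_s → 0 as N → ∞. -/

import Mathlib

open MeasureTheory ProbabilityTheory Real Filter
open scoped ENNReal NNReal Topology

noncomputable section

/-- The model space for every Sobolev-like space `H^r`: the Hilbert space `ℓ²(ℕ; ℝ)`.
An element `u : Hsp`, viewed as a point of `H^r`, represents the sequence
`(x_j)_{j ≥ 1}` with `x_{j+1} = (j+1)^{-r} * u j` (so that `‖u‖ = ‖x‖_r`,
and the indices are shifted by one: `j : ℕ` stands for the coordinate `j+1 ≥ 1`). -/
abbrev Hsp : Type := lp (fun _ : ℕ => ℝ) 2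

/-- the weight `(j+1)^r`. -/
def wt (r : ℝ) (j : ℕ) : ℝ := ((j : ℝ) + 1) ^ r

/-- the coordinates of `u : Hsp` viewed as an element of `H^r`. -/
def seqr (r : ℝ) (u : Hsp) (j : ℕ) : ℝ := wt (-r) j * u j

/-- the `H^r` norm of a raw sequence. -/
def rnorm (r : ℝ) (a : ℕ → ℝ) : ℝ := (∑' j, wt (2 * r) j * a j ^ 2) ^ ((1 : ℝ) / 2)

theorem memℓp_of_eventually_zero (f : ℕ → ℝ) (N : ℕ) (hf : ∀ j, N ≤ j → f j = 0) :
    Memℓp f 2 := by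
  apply memℓp_gen
  apply summable_of_ne_finset_zero (s := Finset.range N)
  intro j hj
  rw [Finset.mem_range, not_lt] at hj
  rw [hf j hj]
  simp [Real.zero_rpow]

/-- embedding of `X^N ≅ ℝ^N` into `Hsp`, viewing `x : Fin N → ℝ` as the element of `H^s`
whose `(i+1)`-th coordinate is `x i` for `i < N` and `0` beyond. -/
def ofX (s : ℝ) (N : ℕ) (x : Fin N → ℝ) : Hsp :=
  ⟨fun j => if h : j < N then wt s j * x ⟨j, h⟩ else 0,
   memℓp_of_eventually_zero _ N (fun j hj => dif_neg (Nat.not_lt.mpr hj))⟩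

/-- the projection `P^N` (truncation of all coordinates beyond the `N`-th). -/
def PNproj (N : ℕ) (u : Hsp) : Hsp :=
  ⟨fun j => if j < N then u j else 0, by
    apply memℓp_gen
    refine Summable.of_nonneg_of_le (fun j => ?_) (fun j => ?_)
      ((lp.memℓp u).summable (by norm_num))
    · positivity
    · by_cases h : j < N <;> simp [h] <;> positivity⟩



lemma wt_pos (r : ℝ) (j : ℕ) : 0 < wt r j :=
  Real.rpow_pos_of_pos (by positivity) r

lemma wt_mul (a b : ℝ) (j : ℕ) : wt a j * wt b j = wt (a+b) j :=
  (Real.rpow_add (by positivity) a b).symm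

lemma wt_le_one {r : ℝ} (hr : r ≤ 0) (j : ℕ) : wt r j ≤ 1 :=
  Real.rpow_le_one_of_one_le_of_nonpos (by simp) hr

lemma sq_summable (u : Hsp) : Summable (fun j => (u j)^2) := by
  have := (lp.memℓp u).summable (p := 2) (by norm_num)
  simpa [Real.rpow_natCast, Real.norm_eq_abs, sq_abs,
    show ((2:ℝ≥0∞).toReal) = ((2:ℕ):ℝ) by norm_num] using this

lemma nsq (u : Hsp) : ∑' j, (u j)^2 = ‖u‖^2 := by
  have := lp.norm_rpow_eq_tsum (p := 2) (by norm_num) u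
  rw [show ((2:ℝ≥0∞).toReal) = ((2:ℕ):ℝ) by norm_num] at this
  simp only [Real.rpow_natCast, Real.norm_eq_abs, sq_abs] at this
  exact this.symm

lemma tail_tendsto (f : ℕ → ℝ) (hf : Summable f) :
    Tendsto (fun N => ∑' j, if j < N then 0 else f j) atTop (𝓝 0) := by
  have key : ∀ N, ∑' j, (if j < N then 0 else f j)
      = (∑' j, f j) - ∑ j ∈ Finset.range N, f j := by
    intro N
    have hsum : Summable (fun j => if j < N then f j else 0) :=
      summable_of_ne_finset_zero (s := Finset.range N)
        (fun j hj => if_neg (by simpa [Finset.mem_range] using hj))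
    have h1 : ∑' j, (if j < N then f j else 0) = ∑ j ∈ Finset.range N, f j := by
      rw [tsum_eq_sum (s := Finset.range N)
        (fun j hj => if_neg (by simpa [Finset.mem_range] using hj))]
      exact Finset.sum_congr rfl (fun j hj => if_pos (Finset.mem_range.mp hj))
    have h2 : (fun j => if j < N then (0:ℝ) else f j)
        = fun j => f j - (if j < N then f j else 0) := by
      funext j; by_cases h : j < N <;> simp [h]
    rw [h2, Summable.tsum_sub hf hsum, h1]
  simp only [key]
  have := hf.hasSum.tendsto_sum_nat
  simpa using (tendsto_const_nhds (x := ∑' j, f j)).sub this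

lemma PNproj_apply (N : ℕ) (u : Hsp) (j : ℕ) :
    (PNproj N u : ℕ → ℝ) j = if j < N then u j else 0 := rfl

lemma PNproj_tendsto (x : Hsp) : Tendsto (fun N => PNproj N x) atTop (𝓝 x) := by
  rw [tendsto_iff_norm_sub_tendsto_zero]
  have hsq : ∀ N, ‖PNproj N x - x‖^2 = ∑' j, if j < N then 0 else (x j)^2 := by
    intro N
    rw [← nsq]
    congr 1; funext j
    by_cases h : j < N <;> simp [lp.coeFn_sub, PNproj_apply, h]
  have h0 : Tendsto (fun N => ‖PNproj N x - x‖^2) atTop (𝓝 0) := by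
    simp only [hsq]; exact tail_tendsto _ (sq_summable x)
  have := (Real.continuous_sqrt.tendsto 0).comp h0
  have heq : ((fun t => Real.sqrt t) ∘ fun N => ‖PNproj N x - x‖ ^ 2)
      = fun N => ‖PNproj N x - x‖ := by
    funext N; simp [Function.comp, Real.sqrt_sq (norm_nonneg _)]
  rw [show Real.sqrt 0 = 0 from Real.sqrt_zero] at this
  rwa [heq] at this

lemma grad_inner (s : ℝ) (Ψ : Hsp → ℝ) (gradΨ : Hsp → Hsp)
    (hgradrep : ∀ x h : Hsp, fderiv ℝ Ψ x h = ∑' j, seqr (-s) (gradΨ x) j * seqr s h j)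
    (x h : Hsp) : fderiv ℝ Ψ x h = (inner ℝ (gradΨ x) h : ℝ) := by
  rw [hgradrep, lp.inner_eq_tsum]
  congr 1; funext j
  simp only [seqr, RCLike.inner_apply, conj_trivial]
  have h1 : wt s j * wt (-s) j = 1 := by
    rw [wt_mul]; simp [wt]
  ring_nf
  linear_combination ((gradΨ x) j * (h : ℕ → ℝ) j) * h1

lemma grad_lip (s : ℝ) (Ψ : Hsp → ℝ) (gradΨ : Hsp → Hsp)
    (hgradrep : ∀ x h : Hsp, fderiv ℝ Ψ x h = ∑' j, seqr (-s) (gradΨ x) j * seqr s h j)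
    (y z : Hsp) : ‖gradΨ y - gradΨ z‖ ≤ ‖fderiv ℝ Ψ y - fderiv ℝ Ψ z‖ := by
  set Δ := gradΨ y - gradΨ z with hΔ
  have key : ‖Δ‖^2 = (fderiv ℝ Ψ y - fderiv ℝ Ψ z) Δ := by
    rw [ContinuousLinearMap.sub_apply, grad_inner s Ψ gradΨ hgradrep,
      grad_inner s Ψ gradΨ hgradrep, ← inner_sub_left, real_inner_self_eq_norm_sq]
  have hb : (fderiv ℝ Ψ y - fderiv ℝ Ψ z) Δ ≤ ‖fderiv ℝ Ψ y - fderiv ℝ Ψ z‖ * ‖Δ‖ :=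
    le_trans (le_abs_self _) ((fderiv ℝ Ψ y - fderiv ℝ Ψ z).le_opNorm Δ)
  rcases eq_or_lt_of_le (norm_nonneg Δ) with h0 | h0
  · rw [← h0]; exact norm_nonneg _
  · have : ‖Δ‖ * ‖Δ‖ ≤ ‖fderiv ℝ Ψ y - fderiv ℝ Ψ z‖ * ‖Δ‖ := by
      nlinarith [key, hb]
    exact le_of_mul_le_mul_right this h0

lemma lam_wt_bound (lam : ℕ → ℝ) (κ cplus s : ℝ) (hcplus : 0 < cplus)
    (hlampos : ∀ j, 0 < lam j) (hlam : ∀ j, lam j ≤ cplus * wt (-κ) j)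
    (hsκ : 2*s + (-κ + -κ) ≤ 0) (j : ℕ) : lam j ^ 2 * wt (2*s) j ≤ cplus^2 := by
  have h1 : lam j ^ 2 ≤ cplus^2 * (wt (-κ) j * wt (-κ) j) := by
    nlinarith [hlam j, (hlampos j).le, (wt_pos (-κ) j).le]
  have h2 : lam j ^ 2 * wt (2*s) j ≤ cplus^2 * (wt (2*s) j * (wt (-κ) j * wt (-κ) j)) := by
    nlinarith [wt_pos (2*s) j, h1]
  have h3 : wt (2*s) j * (wt (-κ) j * wt (-κ) j) = wt (2*s + (-κ + -κ)) j := by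
    rw [wt_mul (-κ) (-κ) j, wt_mul]
  calc lam j ^ 2 * wt (2*s) j ≤ cplus^2 * wt (2*s + (-κ + -κ)) j := by rw [← h3]; exact h2
    _ ≤ cplus^2 * 1 := by
        exact mul_le_mul_of_nonneg_left (wt_le_one hsκ j) (by positivity)
    _ = cplus^2 := mul_one _

def dA (lam : ℕ → ℝ) (s : ℝ) (x : Hsp) (gg : ℕ → Hsp) (g : Hsp) (N j : ℕ) : ℝ :=
  (-((if j < N then seqr s x j else 0)
      + (if j < N then lam j ^ 2 * seqr (-s) (gg N) j else 0)))
    - (-(seqr s x j + lam j ^ 2 * seqr (-s) g j))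

def FA (cplus : ℝ) (x : Hsp) (gg : ℕ → Hsp) (g : Hsp) (N j : ℕ) : ℝ :=
  if j < N then cplus^4 * ((gg N) j - g j)^2
  else 2*(x j)^2 + 2*cplus^4*(g j)^2

lemma main_aux (lam : ℕ → ℝ) (cplus s : ℝ) (hcplus : 0 < cplus)
    (hlampos : ∀ j, 0 < lam j)
    (hAb : ∀ j, lam j ^ 2 * wt (2*s) j ≤ cplus^2)
    (x g : Hsp) (gg : ℕ → Hsp)
    (hGnorm : Tendsto (fun N => ‖gg N - g‖) atTop (𝓝 0)) :
    Tendsto (fun N => rnorm s (dA lam s x gg g N)) atTop (𝓝 0) := by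
  -- summability of Δ²
  have hΔsum : ∀ N, Summable (fun j => ((gg N) j - g j)^2) := fun N =>
    (summable_congr (fun j => by rw [lp.coeFn_sub]; rfl)).mp (sq_summable (gg N - g))
  have hΔval : ∀ N, ∑' j, ((gg N) j - g j)^2 = ‖gg N - g‖^2 := fun N => by
    rw [← nsq]; exact tsum_congr (fun j => by rw [lp.coeFn_sub]; rfl)
  -- pointwise bound
  have hwm : ∀ j, wt s j * wt s j = wt (2*s) j := fun j => by
    rw [wt_mul]; ring_nf
  have hA4 : ∀ j, (lam j ^ 2 * wt (2*s) j)^2 ≤ cplus^4 := by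
    intro j
    have h0 : 0 ≤ lam j ^ 2 * wt (2*s) j := mul_nonneg (sq_nonneg _) (wt_pos _ _).le
    nlinarith [hAb j]
  have hptwise : ∀ N j, wt (2*s) j * (dA lam s x gg g N j)^2 ≤ FA cplus x gg g N j := by
    intro N j
    by_cases hj : j < N
    · have hdv : dA lam s x gg g N j
          = lam j ^ 2 * (wt s j * ((g : ℕ → ℝ) j - (gg N : ℕ → ℝ) j)) := by
        rw [dA, if_pos hj, if_pos hj]; simp only [seqr]; ring
      rw [FA, if_pos hj, hdv]
      have hrw : wt (2*s) j * (lam j ^ 2 * (wt s j * ((g : ℕ → ℝ) j - (gg N : ℕ → ℝ) j)))^2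
          = (lam j ^ 2 * wt (2*s) j)^2 * ((gg N : ℕ → ℝ) j - (g : ℕ → ℝ) j)^2 := by
        rw [← hwm]; ring
      rw [hrw]
      exact mul_le_mul_of_nonneg_right (hA4 j) (sq_nonneg _)
    · have hdv : dA lam s x gg g N j
          = wt (-s) j * (x : ℕ → ℝ) j + lam j ^ 2 * (wt s j * (g : ℕ → ℝ) j) := by
        rw [dA, if_neg hj, if_neg hj]; simp only [seqr]; ring
      rw [FA, if_neg hj, hdv]
      have hab : ∀ a b : ℝ, a = wt (-s) j * (x : ℕ → ℝ) j →
          b = lam j ^ 2 * (wt s j * (g : ℕ → ℝ) j) →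
          wt (2*s) j * (a + b)^2
            ≤ 2*(x : ℕ → ℝ) j ^2 + 2*cplus^4*(g : ℕ → ℝ) j ^2 := by
        intro a b haa hbb'
        have h2 : wt (2*s) j * (a+b)^2 ≤ 2*(wt (2*s) j * a^2) + 2*(wt (2*s) j * b^2) := by
          nlinarith [sq_nonneg (a-b), (wt_pos (2*s) j).le]
        have ha : wt (2*s) j * a^2 = (x : ℕ → ℝ) j ^ 2 := by
          have hone : wt (2*s) j * (wt (-s) j * wt (-s) j) = 1 := by
            rw [wt_mul (-s) (-s) j, wt_mul, show 2*s + (-s + -s) = 0 by ring]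
            simp [wt]
          calc wt (2*s) j * a^2
              = (wt (2*s) j * (wt (-s) j * wt (-s) j)) * (x : ℕ → ℝ) j ^2 := by
                rw [haa]; ring
            _ = (x : ℕ → ℝ) j ^ 2 := by rw [hone, one_mul]
        have hbb : wt (2*s) j * b^2 ≤ cplus^4 * (g : ℕ → ℝ) j ^ 2 := by
          have hrw : wt (2*s) j * b^2
              = (lam j ^ 2 * wt (2*s) j)^2 * (g : ℕ → ℝ) j ^ 2 := by
            rw [hbb', ← hwm j]; ring
          rw [hrw]
          exact mul_le_mul_of_nonneg_right (hA4 j) (sq_nonneg _)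
        calc wt (2*s) j * (a+b)^2
            ≤ 2*(wt (2*s) j * a^2) + 2*(wt (2*s) j * b^2) := h2
          _ ≤ 2*((x : ℕ → ℝ) j ^2) + 2*(cplus^4 * (g : ℕ → ℝ) j ^2) := by
              rw [ha]; nlinarith [hbb]
          _ = 2*(x : ℕ → ℝ) j ^2 + 2*cplus^4*(g : ℕ → ℝ) j ^2 := by ring
      exact hab _ _ rfl rfl
  -- summability
  have hFnonneg : ∀ N j, 0 ≤ FA cplus x gg g N j := by
    intro N j
    rw [FA]
    by_cases hj : j < N
    · rw [if_pos hj]; positivity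
    · rw [if_neg hj]; positivity
  have htailsum : Summable (fun j => 2*((x : ℕ → ℝ) j)^2 + 2*cplus^4*((g : ℕ → ℝ) j)^2) :=
    ((sq_summable x).mul_left 2).add ((sq_summable g).mul_left (2*cplus^4))
  have hFsummable : ∀ N, Summable (FA cplus x gg g N) := by
    intro N
    refine Summable.of_nonneg_of_le (hFnonneg N) (fun j => ?_)
      (((hΔsum N).mul_left (cplus^4)).add htailsum)
    rw [FA]
    by_cases hj : j < N
    · rw [if_pos hj]
      have : 0 ≤ 2*((x : ℕ → ℝ) j)^2 + 2*cplus^4*((g : ℕ → ℝ) j)^2 := by positivity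
      linarith
    · rw [if_neg hj]
      have : 0 ≤ cplus^4 * ((gg N) j - g j)^2 := by positivity
      linarith
  have hLHSsummable : ∀ N, Summable (fun j => wt (2*s) j * (dA lam s x gg g N j)^2) :=
    fun N => Summable.of_nonneg_of_le
      (fun j => mul_nonneg (wt_pos _ _).le (sq_nonneg _)) (hptwise N) (hFsummable N)
  -- split the tsum of FA
  have hFsplit : ∀ N, ∑' j, FA cplus x gg g N j
      ≤ cplus^4 * ‖gg N - g‖^2
        + ∑' j, (if j < N then 0 else 2*((x : ℕ → ℝ) j)^2 + 2*cplus^4*((g : ℕ → ℝ) j)^2) := by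
    intro N
    have hs1 : Summable (fun j =>
        if j < N then cplus^4 * ((gg N) j - g j)^2 else 0) := by
      refine Summable.of_nonneg_of_le (fun j => ?_) (fun j => ?_)
        ((hΔsum N).mul_left (cplus^4))
      · by_cases hj : j < N
        · rw [if_pos hj]; positivity
        · rw [if_neg hj]
      · by_cases hj : j < N
        · rw [if_pos hj]
        · rw [if_neg hj]; positivity
    have hs2 : Summable (fun j =>
        if j < N then (0:ℝ) else 2*((x : ℕ → ℝ) j)^2 + 2*cplus^4*((g : ℕ → ℝ) j)^2) := by
      refine Summable.of_nonneg_of_le (fun j => ?_) (fun j => ?_) htailsum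
      · by_cases hj : j < N
        · rw [if_pos hj]
        · rw [if_neg hj]; positivity
      · by_cases hj : j < N
        · rw [if_pos hj]; positivity
        · rw [if_neg hj]
    have hFeq : (FA cplus x gg g N) = fun j =>
        (if j < N then cplus^4 * ((gg N) j - g j)^2 else 0)
        + (if j < N then 0 else 2*((x : ℕ → ℝ) j)^2 + 2*cplus^4*((g : ℕ → ℝ) j)^2) := by
      funext j
      rw [FA]
      by_cases hj : j < N
      · rw [if_pos hj, if_pos hj, if_pos hj, add_zero]
      · rw [if_neg hj, if_neg hj, if_neg hj, zero_add]
    rw [hFeq, Summable.tsum_add hs1 hs2]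
    refine add_le_add ?_ le_rfl
    rw [← hΔval N, ← tsum_mul_left]
    refine Summable.tsum_le_tsum (fun j => ?_) hs1 ((hΔsum N).mul_left (cplus^4))
    by_cases hj : j < N
    · rw [if_pos hj]
    · rw [if_neg hj]; positivity
  -- convergence of upper bound
  have hTtend : Tendsto (fun N => ∑' j,
      (if j < N then 0 else 2*((x : ℕ → ℝ) j)^2 + 2*cplus^4*((g : ℕ → ℝ) j)^2))
      atTop (𝓝 0) := tail_tendsto _ htailsum
  have hUtend : Tendsto (fun N => cplus^4 * ‖gg N - g‖^2
      + ∑' j, (if j < N then 0 else 2*((x : ℕ → ℝ) j)^2 + 2*cplus^4*((g : ℕ → ℝ) j)^2))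
      atTop (𝓝 0) := by
    have h1 : Tendsto (fun N => cplus^4 * ‖gg N - g‖^2) atTop (𝓝 0) := by
      have := (hGnorm.mul hGnorm).const_mul (cplus^4)
      simpa [sq, mul_zero] using this
    simpa using h1.add hTtend
  -- squeeze
  have hStend : Tendsto (fun N => ∑' j, wt (2*s) j * (dA lam s x gg g N j)^2)
      atTop (𝓝 0) := by
    refine squeeze_zero (fun N => tsum_nonneg
        (fun j => mul_nonneg (wt_pos _ _).le (sq_nonneg _)))
      (fun N => le_trans
        (Summable.tsum_le_tsum (hptwise N) (hLHSsummable N) (hFsummable N)) (hFsplit N)) hUtend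
  -- conclude
  have hcont : ContinuousAt (fun t : ℝ => t ^ ((1:ℝ)/2)) 0 :=
    Real.continuousAt_rpow_const 0 ((1:ℝ)/2) (Or.inr (by norm_num))
  have hfinal := hcont.tendsto.comp hStend
  rw [show (0:ℝ) ^ ((1:ℝ)/2) = 0 from Real.zero_rpow (by norm_num)] at hfinal
  exact hfinal

theorem statement_5 (lam : ℕ → ℝ) (κ cminus cplus s : ℝ) (Ψ : Hsp → ℝ) (gradΨ : Hsp → Hsp)
    (M₁ M₂ M₃ M₄ : ℝ)
    (hκ : 1/2 < κ) (hcminus : 0 < cminus) (hcpm : cminus ≤ cplus)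
    (hlampos : ∀ j : ℕ, 0 < lam j)
    (hlam : ∀ j : ℕ, cminus * wt (-κ) j ≤ lam j ∧ lam j ≤ cplus * wt (-κ) j)
    (hs0 : 0 ≤ s) (hsκ : s < κ - 1/2)
    (hΨdiff : Differentiable ℝ Ψ) (hΨdiff2 : Differentiable ℝ (fderiv ℝ Ψ))
    (hgradrep : ∀ x h : Hsp, fderiv ℝ Ψ x h = ∑' j, seqr (-s) (gradΨ x) j * seqr s h j)
    (hΨlb : ∀ x : Hsp, M₁ ≤ Ψ x) (hΨub : ∀ x : Hsp, Ψ x ≤ M₂ * (1 + ‖x‖ ^ 2))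
    (hgradb : ∀ x : Hsp, ‖gradΨ x‖ ≤ M₃ * (1 + ‖x‖))
    (hhessb : ∀ x : Hsp, ‖fderiv ℝ (fderiv ℝ Ψ) x‖ ≤ M₄):
    ∀ x : Hsp,
      Tendsto (fun N : ℕ =>
          rnorm s (fun j =>
            (-((if j < N then seqr s x j else 0)
                + (if j < N then lam j ^ 2 * seqr (-s) (gradΨ (PNproj N x)) j else 0)))
            - (-(seqr s x j + lam j ^ 2 * seqr (-s) (gradΨ x) j))))
        atTop (𝓝 0) := by
  intro x
  have hcplus : 0 < cplus := lt_of_lt_of_le hcminus hcpm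
  have hsκ' : 2*s + (-κ + -κ) ≤ 0 := by linarith
  have hAb : ∀ j, lam j ^ 2 * wt (2*s) j ≤ cplus^2 :=
    lam_wt_bound lam κ cplus s hcplus hlampos (fun j => (hlam j).2) hsκ'
  have hGnorm : Tendsto (fun N => ‖gradΨ (PNproj N x) - gradΨ x‖) atTop (𝓝 0) := by
    have hfd : Tendsto (fun N => fderiv ℝ Ψ (PNproj N x)) atTop (𝓝 (fderiv ℝ Ψ x)) :=
      ((hΨdiff2.continuous.tendsto x).comp (PNproj_tendsto x))
    have hfd0 : Tendsto (fun N => ‖fderiv ℝ Ψ (PNproj N x) - fderiv ℝ Ψ x‖) atTop (𝓝 0) :=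
      tendsto_iff_norm_sub_tendsto_zero.mp hfd
    exact squeeze_zero (fun N => norm_nonneg _)
      (fun N => grad_lip s Ψ gradΨ hgradrep (PNproj N x) x) hfd0
  exact main_aux lam cplus s hcplus hlampos hAb x (gradΨ x)
    (fun N => gradΨ (PNproj N x)) hGnorm

end
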